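/- If gcd(m, ℓ) = 1, then the quotient B_n/B_n[mℓ] is isomorphic to the product B_n/B_n[m] × B_n/B_n[ℓ]. -/

import Mathlib

open Matrix FreeGroup

/-- The braid relations on `n` strands, with Artin generators indexed by `Fin (n-1)`. -/
def braidRels (n : ℕ) : Set (FreeGroup (Fin (n - 1))) :=
  {r | (∃ i j : Fin (n - 1), (i : ℕ) + 1 = (j : ℕ) ∧
          r = of i * of j * of i * (of j * of i * of j)⁻¹) ∨
       (∃ i j : Fin (n - 1), (i : ℕ) + 2 ≤ (j : ℕ) ∧
          r = of i * of j * (of j * of i)⁻¹)}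

/-- The braid group on `n` strands, as a presented group. -/
def BraidGroup (n : ℕ) : Type := PresentedGroup (braidRels n)

instance (n : ℕ) : Group (BraidGroup n) := by unfold BraidGroup; infer_instance

/-- The Artin generator `σ_{i+1}` of the braid group on `n` strands. -/
def σ {n : ℕ} (i : Fin (n - 1)) : BraidGroup n := PresentedGroup.of i

/-- The integral Burau matrix of the Artin generator `σ_{i+1}` (rows and columns `i`, `i+1`
in 0-indexed notation): the identity matrix with the block `[[2, -1], [1, 0]]` inserted. -/
def burauMat (n : ℕ) (i : ℕ) : Matrix (Fin n) (Fin n) ℤ :=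
  Matrix.of fun j k =>
    if (j : ℕ) = i ∧ (k : ℕ) = i then 2
    else if (j : ℕ) = i ∧ (k : ℕ) = i + 1 then -1
    else if (j : ℕ) = i + 1 ∧ (k : ℕ) = i then 1
    else if (j : ℕ) = i + 1 ∧ (k : ℕ) = i + 1 then 0
    else if j = k then 1 else 0

/-- `IsBurau ρ` asserts that `ρ` is the integral Burau representation (Burau at `t = -1`). -/
def IsBurau {n : ℕ} (ρ : BraidGroup n →* Matrix.GeneralLinearGroup (Fin n) ℤ) : Prop :=
  ∀ i : Fin (n - 1), (ρ (σ i) : Matrix (Fin n) (Fin n) ℤ) = burauMat n (i : ℕ)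

/-- Reduction modulo `ℓ` on `GL(n, ℤ)`. -/
def glMod (n ℓ : ℕ) :
    Matrix.GeneralLinearGroup (Fin n) ℤ →* Matrix.GeneralLinearGroup (Fin n) (ZMod ℓ) :=
  Units.map ((Int.castRingHom (ZMod ℓ)).mapMatrix.toMonoidHom)

/-- The level-`ℓ` congruence subgroup `B_n[ℓ]` of the braid group: the kernel of the
integral Burau representation reduced mod `ℓ`. -/
def braidCong {n : ℕ} (ρ : BraidGroup n →* Matrix.GeneralLinearGroup (Fin n) ℤ) (ℓ : ℕ) :
    Subgroup (BraidGroup n) :=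
  ((glMod n ℓ).comp ρ).ker

instance braidCong_normal {n : ℕ} (ρ : BraidGroup n →* Matrix.GeneralLinearGroup (Fin n) ℤ)
    (ℓ : ℕ) : (braidCong ρ ℓ).Normal :=
  MonoidHom.normal_ker _

/-! ### Auxiliary lemmas -/

/-- auxiliary vector `v`. -/
def bvv (R : Type*) [CommRing R] (n i : ℕ) : Fin n → R :=
  fun j => if (j : ℕ) = i ∨ (j : ℕ) = i + 1 then 1 else 0

/-- auxiliary vector `w`. -/
def bww (R : Type*) [CommRing R] (n i : ℕ) : Fin n → R :=
  fun k => if (k : ℕ) = i then 1 else if (k : ℕ) = i + 1 then -1 else 0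

theorem vecMulVec_mul_vecMulVec' {R : Type*} [CommRing R] {n : ℕ} (v w v' w' : Fin n → R) :
    vecMulVec v w * vecMulVec v' w' = (w ⬝ᵥ v') • vecMulVec v w' := by
  ext j k
  simp only [Matrix.mul_apply, vecMulVec_apply, Matrix.smul_apply, dotProduct,
    smul_eq_mul, Finset.sum_mul]
  apply Finset.sum_congr rfl
  intros; ring

theorem bww_dot_bvv {R : Type*} [CommRing R] {n i : ℕ} (h : i + 1 < n) :
    bww R n i ⬝ᵥ bvv R n i = 0 := by
  have hi : i < n := by omega
  have key : ∀ l : Fin n, bww R n i l * bvv R n i l =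
      (if l = (⟨i, hi⟩ : Fin n) then 1 else 0) + (if l = (⟨i + 1, h⟩ : Fin n) then -1 else 0) := by
    intro l
    simp only [bvv, bww, Fin.ext_iff]
    split_ifs <;> simp_all
  simp [dotProduct, key, Finset.sum_add_distrib]

theorem burauMat_eq' {n i : ℕ} (h : i + 1 < n) :
    burauMat n i = 1 + vecMulVec (bvv ℤ n i) (bww ℤ n i) := by
  ext j k
  simp only [burauMat, Matrix.of_apply, Matrix.add_apply, Matrix.one_apply, vecMulVec_apply,
    bvv, bww, Fin.ext_iff]
  split_ifs <;> simp_all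

theorem one_add_sq_zero_pow {S : Type*} [Ring S] (e : S) (he : e * e = 0) (k : ℕ) :
    (1 + e) ^ k = 1 + k • e := by
  induction k with
  | zero => simp
  | succ k ih =>
      rw [pow_succ, ih, nsmul_eq_mul, nsmul_eq_mul]
      have : (1 + (k : S) * e) * (1 + e) = 1 + ((k : S) + 1) * e + (k : S) * (e * e) := by
        noncomm_ring
      rw [this, he, mul_zero, add_zero]
      push_cast
      ring

theorem map_burauMat {n i L : ℕ} (h : i + 1 < n) :
    (burauMat n i).map (Int.cast : ℤ → ZMod L) =
      1 + vecMulVec (bvv (ZMod L) n i) (bww (ZMod L) n i) := by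
  rw [burauMat_eq' h]
  ext j k
  simp only [Matrix.map_apply, Matrix.add_apply, Matrix.one_apply, vecMulVec_apply, bvv, bww]
  push_cast [apply_ite (Int.cast : ℤ → ZMod L)]
  rfl

theorem sigma_pow_mem {n : ℕ} (ρ : BraidGroup n →* Matrix.GeneralLinearGroup (Fin n) ℤ)
    (hρ : IsBurau ρ) (L k : ℕ) (hd : L ∣ k) (i : Fin (n - 1)) :
    σ i ^ k ∈ braidCong ρ L := by
  have hi : (i : ℕ) + 1 < n := by have := i.isLt; omega
  rw [braidCong, MonoidHom.mem_ker, map_pow]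
  refine Units.ext ?_
  rw [Units.val_pow_eq_pow_val, Units.val_one]
  have hval : (((glMod n L).comp ρ (σ i)) : Matrix (Fin n) (Fin n) (ZMod L)) =
      1 + vecMulVec (bvv (ZMod L) n i) (bww (ZMod L) n i) := by
    have : (((glMod n L).comp ρ (σ i)) : Matrix (Fin n) (Fin n) (ZMod L)) =
        ((ρ (σ i) : Matrix (Fin n) (Fin n) ℤ)).map (Int.cast : ℤ → ZMod L) := rfl
    rw [this, hρ i, map_burauMat hi]
  rw [hval, one_add_sq_zero_pow _ (by
    rw [vecMulVec_mul_vecMulVec', bww_dot_bvv hi, zero_smul]) k]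
  obtain ⟨t, rfl⟩ := hd
  rw [← Nat.cast_smul_eq_nsmul (ZMod L), Nat.cast_mul, ZMod.natCast_self, zero_mul,
    zero_smul, add_zero]

theorem mem_braidCong_iff {n : ℕ} (ρ : BraidGroup n →* Matrix.GeneralLinearGroup (Fin n) ℤ)
    (L : ℕ) (g : BraidGroup n) :
    g ∈ braidCong ρ L ↔ ∀ j k : Fin n,
      (ρ g : Matrix (Fin n) (Fin n) ℤ) j k ≡ (if j = k then 1 else 0) [ZMOD L] := by
  rw [braidCong, MonoidHom.mem_ker, MonoidHom.comp_apply, Units.ext_iff, Units.val_one,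
    ← Matrix.ext_iff]
  refine forall₂_congr fun j k => ?_
  have lhs : ((glMod n L (ρ g)) : Matrix (Fin n) (Fin n) (ZMod L)) j k =
      (((ρ g : Matrix (Fin n) (Fin n) ℤ) j k : ZMod L)) := rfl
  have rhs : ((1 : Matrix (Fin n) (Fin n) (ZMod L))) j k =
      (((if j = k then 1 else 0 : ℤ) : ZMod L)) := by
    simp [Matrix.one_apply, apply_ite (Int.cast : ℤ → ZMod L)]
  rw [lhs, rhs, ZMod.intCast_eq_intCast_iff]

theorem braidCong_inf {n : ℕ} (ρ : BraidGroup n →* Matrix.GeneralLinearGroup (Fin n) ℤ)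
    (m ℓ : ℕ) (h : Nat.gcd m ℓ = 1) :
    braidCong ρ m ⊓ braidCong ρ ℓ = braidCong ρ (m * ℓ) := by
  have hco : (m : ℤ).natAbs.Coprime (ℓ : ℤ).natAbs := by
    simpa [Int.natAbs_natCast, Nat.Coprime] using h
  ext g
  simp only [Subgroup.mem_inf, mem_braidCong_iff]
  constructor
  · rintro ⟨h1, h2⟩ j k
    have := (Int.modEq_and_modEq_iff_modEq_mul hco).mp ⟨h1 j k, h2 j k⟩
    simpa [Nat.cast_mul] using this
  · intro h1
    constructor <;> intro j k <;>
      [exact ((Int.modEq_and_modEq_iff_modEq_mul hco).mpr (by simpa [Nat.cast_mul] using h1 j k)).1;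
       exact ((Int.modEq_and_modEq_iff_modEq_mul hco).mpr (by simpa [Nat.cast_mul] using h1 j k)).2]

theorem braidCong_sup {n : ℕ} (ρ : BraidGroup n →* Matrix.GeneralLinearGroup (Fin n) ℤ)
    (hρ : IsBurau ρ) (m ℓ : ℕ) (h : Nat.gcd m ℓ = 1) :
    braidCong ρ m ⊔ braidCong ρ ℓ = ⊤ := by
  have hsig : ∀ i : Fin (n - 1), σ i ∈ braidCong ρ m ⊔ braidCong ρ ℓ := by
    intro i
    have h1 : σ i ^ m ∈ braidCong ρ m ⊔ braidCong ρ ℓ :=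
      Subgroup.mem_sup_left (sigma_pow_mem ρ hρ m m dvd_rfl i)
    have h2 : σ i ^ ℓ ∈ braidCong ρ m ⊔ braidCong ρ ℓ :=
      Subgroup.mem_sup_right (sigma_pow_mem ρ hρ ℓ ℓ dvd_rfl i)
    have hb : (m : ℤ) * Int.gcdA m ℓ + (ℓ : ℤ) * Int.gcdB m ℓ = 1 := by
      have := Int.gcd_eq_gcd_ab (m : ℤ) (ℓ : ℤ)
      rw [Int.gcd_natCast_natCast, h] at this
      exact_mod_cast this.symm
    have : σ i = (σ i ^ m) ^ Int.gcdA m ℓ * (σ i ^ ℓ) ^ Int.gcdB m ℓ := by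
      rw [← zpow_natCast (σ i) m, ← zpow_natCast (σ i) ℓ, ← _root_.zpow_mul, ← _root_.zpow_mul,
        ← _root_.zpow_add, hb, zpow_one]
    rw [this]
    exact mul_mem (Subgroup.zpow_mem _ h1 _) (Subgroup.zpow_mem _ h2 _)
  have htop : Subgroup.closure (Set.range (σ : Fin (n - 1) → BraidGroup n)) = ⊤ :=
    PresentedGroup.closure_range_of (braidRels n)
  rw [eq_top_iff, ← htop, Subgroup.closure_le]
  rintro _ ⟨i, rfl⟩
  exact hsig i

theorem braidQuotient_coprime_iso {n : ℕ}
    (ρ : BraidGroup n →* Matrix.GeneralLinearGroup (Fin n) ℤ) (hρ : IsBurau ρ)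
    (m ℓ : ℕ) (hm : 0 < m) (hℓ : 0 < ℓ) (h : Nat.gcd m ℓ = 1) :
    Nonempty
      ((BraidGroup n ⧸ braidCong ρ (m * ℓ)) ≃*
        (BraidGroup n ⧸ braidCong ρ m) × (BraidGroup n ⧸ braidCong ρ ℓ)) := by
  set Nm := braidCong ρ m
  set Nl := braidCong ρ ℓ
  let φ : BraidGroup n →* (BraidGroup n ⧸ Nm) × (BraidGroup n ⧸ Nl) :=
    (QuotientGroup.mk' Nm).prod (QuotientGroup.mk' Nl)
  have hker : braidCong ρ (m * ℓ) = φ.ker := by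
    rw [MonoidHom.ker_prod, QuotientGroup.ker_mk', QuotientGroup.ker_mk',
      braidCong_inf ρ m ℓ h]
  have hsurj : Function.Surjective φ := by
    rintro ⟨x, y⟩
    obtain ⟨a, rfl⟩ := QuotientGroup.mk'_surjective Nm x
    obtain ⟨b, rfl⟩ := QuotientGroup.mk'_surjective Nl y
    have hab : a * b⁻¹ ∈ Nm ⊔ Nl := by
      rw [braidCong_sup ρ hρ m ℓ h]; trivial
    rw [← SetLike.mem_coe, Subgroup.mul_normal] at hab
    obtain ⟨c, hc, d, hd, hcd⟩ := hab
    refine ⟨c⁻¹ * a, Prod.ext ?_ ?_⟩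
    · show QuotientGroup.mk (c⁻¹ * a) = QuotientGroup.mk a
      rw [QuotientGroup.eq]
      simpa [mul_assoc] using (braidCong_normal ρ m).conj_mem _ hc a⁻¹
    · show QuotientGroup.mk (c⁻¹ * a) = QuotientGroup.mk b
      have hcd' : c * d = a * b⁻¹ := hcd
      have hd2 : d = c⁻¹ * (a * b⁻¹) := by rw [← hcd']; group
      have heq : c⁻¹ * a = d * b := by rw [hd2]; group
      rw [heq, QuotientGroup.eq]
      simpa [mul_assoc] using (braidCong_normal ρ ℓ).conj_mem _ (Nl.inv_mem hd) b⁻¹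
  exact ⟨(QuotientGroup.quotientMulEquivOfEq hker).trans
    (QuotientGroup.quotientKerEquivOfSurjective φ hsurj)⟩
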